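/- Jensen-type bound for rate reduction with two groups: let Z₁ ∈ ℝ^{d×m₁}, Z₂ ∈ ℝ^{d×m₂}, m = m₁ + m₂, and Z = [Z₁ Z₂]. Then the rate reduction ΔR := (1/2) log det(I + (d/(mε²)) Z Zᵀ) − (m₁/m)·(1/2) log det(I + (d/(m₁ε²)) Z₁Z₁ᵀ) − (m₂/m)·(1/2) log det(I + (d/(m₂ε²)) Z₂Z₂ᵀ) is nonnegative. -/

import Mathlib

open Matrix Finset

private lemma auxSmulPSD {N : Type*} [Fintype N] {A : Matrix N N ℝ} (hA : A.PosSemidef)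
    {c : ℝ} (hc : 0 ≤ c) : (c • A).PosSemidef := by
  refine PosSemidef.of_dotProduct_mulVec_nonneg ?_ (fun x => ?_)
  · have h := hA.1
    unfold Matrix.IsHermitian at *
    rw [conjTranspose_smul, star_trivial, h]
  · rw [smul_mulVec, dotProduct_smul, smul_eq_mul]
    exact mul_nonneg hc (hA.dotProduct_mulVec_nonneg x)

private lemma auxConjPD {N : Type*} [Fintype N] [DecidableEq N] {A S : Matrix N N ℝ}
    (hA : A.PosDef) (hS : S.IsHermitian) (hdet : IsUnit S.det) :
    (S * A * S).PosDef := by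
  have : Invertible S := S.invertibleOfIsUnitDet hdet
  refine PosDef.of_dotProduct_mulVec_pos ?_ (fun x hx => ?_)
  · have h := isHermitian_conjTranspose_mul_mul S hA.1
    rwa [hS.eq] at h
  · have hx' : S *ᵥ x ≠ 0 := fun h => hx (S.mulVec_injective_of_invertible (by simpa using h))
    have e : S * A * S = Sᴴ * A * S := by rw [hS.eq]
    rw [e]
    simpa only [star_mulVec, dotProduct_mulVec, vecMul_vecMul] using hA.dotProduct_mulVec_pos hx'

private lemma auxDetComb {N : Type*} [Fintype N] [DecidableEq N] {C : Matrix N N ℝ}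
    (hC : C.IsHermitian) (s t : ℝ) :
    (s • (1 : Matrix N N ℝ) + t • C).det = ∏ i, (s + t * hC.eigenvalues i) := by
  set U : Matrix N N ℝ := (hC.eigenvectorUnitary : Matrix N N ℝ) with hUdef
  have hU : U * star U = 1 := (Matrix.mem_unitaryGroup_iff).mp hC.eigenvectorUnitary.2
  have hD : Matrix.diagonal (fun i => s + t * hC.eigenvalues i)
      = s • (1 : Matrix N N ℝ) + t • Matrix.diagonal hC.eigenvalues := by
    rw [← Matrix.diagonal_one, ← Matrix.diagonal_smul, ← Matrix.diagonal_smul,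
      Matrix.diagonal_add]
    funext i
    simp
  have hspec : U * Matrix.diagonal hC.eigenvalues * star U = C := by
    have h2 := hC.spectral_theorem
    rw [RCLike.ofReal_real_eq_id] at h2
    simpa using h2.symm
  have hcomb : s • (1 : Matrix N N ℝ) + t • C
      = U * Matrix.diagonal (fun i => s + t * hC.eigenvalues i) * star U := by
    rw [hD, Matrix.mul_add, Matrix.add_mul,
      mul_smul_comm, mul_smul_comm, smul_mul_assoc, smul_mul_assoc,
      Matrix.mul_one, hU, hspec]
  have hU2 : U.det * (star U).det = 1 := by rw [← Matrix.det_mul, hU, Matrix.det_one]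
  rw [hcomb, Matrix.det_mul, Matrix.det_mul, mul_right_comm, hU2, one_mul,
    Matrix.det_diagonal]

open scoped MatrixOrder in
private lemma auxLogDetConcave {N : Type*} [Fintype N] [DecidableEq N]
    {A B : Matrix N N ℝ} (hA : A.PosDef) (hB : B.PosDef)
    {s t : ℝ} (hs : 0 < s) (ht : 0 < t) (hst : s + t = 1) :
    s * Real.log A.det + t * Real.log B.det ≤ Real.log (s • A + t • B).det := by
  classical
  set S := CFC.sqrt A with hSdef
  have hS : S.PosSemidef := (CFC.sqrt_nonneg A).posSemidef
  have hSS : S * S = A := CFC.sqrt_mul_sqrt_self A hA.posSemidef.nonneg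
  have hdetA : 0 < A.det := hA.det_pos
  have hdetB : 0 < B.det := hB.det_pos
  have hdetS : S.det ≠ 0 := by
    intro h
    rw [← hSS, Matrix.det_mul, h, mul_zero] at hdetA
    exact lt_irrefl _ hdetA
  have hSu : IsUnit S.det := isUnit_iff_ne_zero.mpr hdetS
  have hinv : Invertible S := S.invertibleOfIsUnitDet hSu
  set C := S⁻¹ * B * S⁻¹ with hCdef
  have hC : C.PosDef := auxConjPD hB hS.1.inv (S.isUnit_nonsing_inv_det hSu)
  have hcomb : s • A + t • B = S * (s • (1 : Matrix N N ℝ) + t • C) * S := by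
    rw [Matrix.mul_add, Matrix.add_mul, mul_smul_comm, mul_smul_comm,
      smul_mul_assoc, smul_mul_assoc, Matrix.mul_one, hSS]
    congr 2
    rw [hCdef, ← Matrix.mul_assoc, ← Matrix.mul_assoc, S.mul_nonsing_inv hSu, Matrix.one_mul,
      Matrix.mul_assoc, S.nonsing_inv_mul hSu, Matrix.mul_one]
  have hdet1 : (s • A + t • B).det = A.det * (s • (1 : Matrix N N ℝ) + t • C).det := by
    rw [hcomb, Matrix.det_mul, Matrix.det_mul, ← hSS, Matrix.det_mul]
    ring
  have hdetC : C.det = B.det / A.det := by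
    rw [hCdef, Matrix.det_mul, Matrix.det_mul, Matrix.det_nonsing_inv, Ring.inverse_eq_inv',
      ← hSS, Matrix.det_mul]
    field_simp
  have hdetCpos : 0 < C.det := hC.det_pos
  set lam := hC.1.eigenvalues with hlam
  have hlampos : ∀ i, 0 < lam i := fun i => hC.eigenvalues_pos i
  have hterm : ∀ i, 0 < s + t * lam i := fun i =>
    add_pos hs (mul_pos ht (hlampos i))
  have hdet2 : (s • (1 : Matrix N N ℝ) + t • C).det = ∏ i, (s + t * lam i) :=
    auxDetComb hC.1 s t
  have hprodpos : 0 < ∏ i, (s + t * lam i) := Finset.prod_pos (fun i _ => hterm i)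
  -- per-eigenvalue concavity of log
  have hkey : ∀ i, t * Real.log (lam i) ≤ Real.log (s + t * lam i) := by
    intro i
    have h := strictConcaveOn_log_Ioi.concaveOn.2 (Set.mem_Ioi.mpr one_pos)
      (Set.mem_Ioi.mpr (hlampos i)) hs.le ht.le hst
    simpa using h
  have hlogCsum : Real.log C.det = ∑ i, Real.log (lam i) := by
    rw [hC.1.det_eq_prod_eigenvalues]
    simp only [RCLike.ofReal_real_eq_id, id_eq]
    exact Real.log_prod (fun i _ => (hlampos i).ne')
  have hsum : t * Real.log C.det ≤ Real.log (∏ i, (s + t * lam i)) := by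
    rw [Real.log_prod (fun i _ => (hterm i).ne'), hlogCsum, Finset.mul_sum]
    exact Finset.sum_le_sum fun i _ => hkey i
  have hlogC : Real.log C.det = Real.log B.det - Real.log A.det := by
    rw [hdetC, Real.log_div hdetB.ne' hdetA.ne']
  have hfinal : Real.log (s • A + t • B).det
      = Real.log A.det + Real.log (∏ i, (s + t * lam i)) := by
    rw [hdet1, hdet2, Real.log_mul hdetA.ne' hprodpos.ne']
  rw [hfinal]
  rw [hlogC] at hsum
  have hs' : s = 1 - t := by linarith
  calc s * Real.log A.det + t * Real.log B.det
      = Real.log A.det + t * (Real.log B.det - Real.log A.det) := by rw [hs']; ring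
    _ ≤ Real.log A.det + Real.log (∏ i, (s + t * lam i)) := by linarith

open Matrix

theorem stmt_17 (d m₁ m₂ : ℕ) (hm₁ : 0 < m₁) (hm₂ : 0 < m₂)
    (Z₁ : Matrix (Fin d) (Fin m₁) ℝ) (Z₂ : Matrix (Fin d) (Fin m₂) ℝ) (ε : ℝ) (hε : 0 < ε) :
    0 ≤ (1 / 2) * Real.log
        (Matrix.det (1 + ((d : ℝ) / ((m₁ + m₂ : ℕ) * ε ^ 2)) • (Z₁ * Z₁ᵀ + Z₂ * Z₂ᵀ))) -
      ((m₁ : ℝ) / (m₁ + m₂ : ℕ)) * ((1 / 2) * Real.log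
        (Matrix.det (1 + ((d : ℝ) / (m₁ * ε ^ 2)) • (Z₁ * Z₁ᵀ)))) -
      ((m₂ : ℝ) / (m₁ + m₂ : ℕ)) * ((1 / 2) * Real.log
        (Matrix.det (1 + ((d : ℝ) / (m₂ * ε ^ 2)) • (Z₂ * Z₂ᵀ)))) := by
  have hm : (0:ℝ) < (m₁:ℝ) + m₂ := by positivity
  have hm₁' : (0:ℝ) < (m₁:ℝ) := by exact_mod_cast hm₁
  have hm₂' : (0:ℝ) < (m₂:ℝ) := by exact_mod_cast hm₂
  have hT1 : Z₁ᴴ = Z₁ᵀ := Matrix.conjTranspose_eq_transpose_of_trivial Z₁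
  have hT2 : Z₂ᴴ = Z₂ᵀ := Matrix.conjTranspose_eq_transpose_of_trivial Z₂
  have hP1 : (Z₁ * Z₁ᵀ).PosSemidef := hT1 ▸ Matrix.posSemidef_self_mul_conjTranspose Z₁
  have hP2 : (Z₂ * Z₂ᵀ).PosSemidef := hT2 ▸ Matrix.posSemidef_self_mul_conjTranspose Z₂
  have hc1 : (0:ℝ) ≤ (d:ℝ) / (m₁ * ε ^ 2) := by positivity
  have hc2 : (0:ℝ) ≤ (d:ℝ) / (m₂ * ε ^ 2) := by positivity
  set A : Matrix (Fin d) (Fin d) ℝ := 1 + ((d : ℝ) / (m₁ * ε ^ 2)) • (Z₁ * Z₁ᵀ) with hAdef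
  set B : Matrix (Fin d) (Fin d) ℝ := 1 + ((d : ℝ) / (m₂ * ε ^ 2)) • (Z₂ * Z₂ᵀ) with hBdef
  have hA : A.PosDef := Matrix.PosDef.one.add_posSemidef (auxSmulPSD hP1 hc1)
  have hB : B.PosDef := Matrix.PosDef.one.add_posSemidef (auxSmulPSD hP2 hc2)
  set s : ℝ := (m₁:ℝ) / ((m₁:ℝ) + m₂) with hsdef
  set t : ℝ := (m₂:ℝ) / ((m₁:ℝ) + m₂) with htdef
  have hs : 0 < s := by positivity
  have ht : 0 < t := by positivity
  have hst : s + t = 1 := by rw [hsdef, htdef, ← add_div, div_self hm.ne']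
  have hε2 : ε ^ 2 ≠ 0 := by positivity
  have e1 : s * ((d:ℝ) / (m₁ * ε ^ 2)) = (d:ℝ) / (((m₁:ℝ) + m₂) * ε ^ 2) := by
    rw [hsdef]; field_simp
  have e2 : t * ((d:ℝ) / (m₂ * ε ^ 2)) = (d:ℝ) / (((m₁:ℝ) + m₂) * ε ^ 2) := by
    rw [htdef]; field_simp
  have hcomb : s • A + t • B
      = 1 + ((d : ℝ) / (((m₁:ℝ) + m₂) * ε ^ 2)) • (Z₁ * Z₁ᵀ + Z₂ * Z₂ᵀ) := by
    rw [hAdef, hBdef, smul_add, smul_add, smul_smul, smul_smul, e1, e2, smul_add]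
    have h1 : s • (1 : Matrix (Fin d) (Fin d) ℝ) + t • 1 = 1 := by
      rw [← add_smul, hst, one_smul]
    rw [add_add_add_comm, h1]
  have hmain := auxLogDetConcave hA hB hs ht hst
  rw [hcomb] at hmain
  have hcast : ((m₁ + m₂ : ℕ) : ℝ) = (m₁:ℝ) + m₂ := by push_cast; ring
  rw [hcast]
  nlinarith [hmain]
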